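/- If φ: (0,∞) → [0,∞) is C¹, increasing, satisfies ∫₁^∞ φ(t)/t² dt < ∞, and the function τ ↦ φ(e^τ) is convex, then lim_{t→∞} φ'(t) = 0. -/

import Mathlib

open Set Filter MeasureTheory

theorem stmt0 (φ φ' : ℝ → ℝ)
    (hderiv : ∀ t ∈ Ioi (0:ℝ), HasDerivAt φ (φ' t) t)
    (hcont : ContinuousOn φ' (Ioi 0))
    (hnonneg : ∀ t ∈ Ioi (0:ℝ), 0 ≤ φ t)
    (hmono : MonotoneOn φ (Ioi 0))
    (hint : IntegrableOn (fun t => φ t / t ^ 2) (Ioi 1))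
    (hconv : ConvexOn ℝ univ (fun τ => φ (Real.exp τ))) :
    Tendsto φ' atTop (nhds 0) := by
  -- derivative of ψ τ = φ (exp τ)
  have hψ : ∀ τ : ℝ, HasDerivAt (fun τ => φ (Real.exp τ))
      (φ' (Real.exp τ) * Real.exp τ) τ := fun τ =>
    (hderiv _ (Real.exp_pos τ)).comp τ (Real.hasDerivAt_exp τ)
  -- φ' nonneg, for t > 0
  have hφ'nonneg : ∀ t : ℝ, 0 < t → 0 ≤ φ' t := by
    intro t ht
    have h := hconv.slope_le_of_hasDerivAt (mem_univ (Real.log t - 1)) (mem_univ (Real.log t))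
      (by linarith) (hψ (Real.log t))
    rw [slope_def_field, Real.exp_log ht] at h
    have hφle : φ (Real.exp (Real.log t - 1)) ≤ φ t := by
      have h2 : Real.exp (Real.log t - 1) ≤ t := by
        calc Real.exp (Real.log t - 1) ≤ Real.exp (Real.log t) :=
              Real.exp_le_exp.2 (by linarith)
          _ = t := Real.exp_log ht
      exact hmono (mem_Ioi.2 (Real.exp_pos _)) (mem_Ioi.2 ht) h2
    have hslope : (0:ℝ) ≤ (φ t - φ (Real.exp (Real.log t - 1))) / (Real.log t - (Real.log t - 1)) :=
      div_nonneg (sub_nonneg.2 hφle) (by linarith)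
    nlinarith [le_trans hslope h, ht]
  -- key upper bound: t * φ' t ≤ φ (e * t) - φ t
  have hkey : ∀ t : ℝ, 0 < t → t * φ' t ≤ φ (Real.exp 1 * t) - φ t := by
    intro t ht
    have h := hconv.le_slope_of_hasDerivAt (mem_univ (Real.log t)) (mem_univ (Real.log t + 1))
      (by linarith) (hψ (Real.log t))
    rw [slope_def_field] at h
    have h2 : Real.exp (Real.log t + 1) = Real.exp 1 * t := by
      rw [Real.exp_add, Real.exp_log ht]; ring
    rw [h2, Real.exp_log ht] at h
    have h1 : Real.log t + 1 - Real.log t = 1 := by ring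
    rw [h1, div_one] at h
    nlinarith
  -- interval integrability
  have hii : ∀ a b : ℝ, 1 ≤ a → a ≤ b → IntervalIntegrable (fun s => φ s / s ^ 2) volume a b := by
    intro a b ha hab
    rw [intervalIntegrable_iff_integrableOn_Ioc_of_le hab]
    exact hint.mono_set (fun x hx => lt_of_lt_of_le (lt_of_le_of_lt ha hx.1) le_rfl)
  -- tail: φ t / t → 0
  have htail : Tendsto (fun t => φ t / t) atTop (nhds 0) := by
    set L := ∫ s in Ioi (1:ℝ), φ s / s ^ 2 with hL
    have hG : Tendsto (fun x => ∫ s in (1:ℝ)..x, φ s / s ^ 2) atTop (nhds L) :=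
      intervalIntegral_tendsto_integral_Ioi 1 hint tendsto_id
    have hGdiff : Tendsto (fun t : ℝ => 2 * ((∫ s in (1:ℝ)..(2*t), φ s / s ^ 2)
        - ∫ s in (1:ℝ)..t, φ s / s ^ 2)) atTop (nhds 0) := by
      have h2 := (hG.comp (tendsto_id.const_mul_atTop (by norm_num : (0:ℝ) < 2))).sub hG
      have h0 : L - L = 0 := sub_self L
      have := (tendsto_const_nhds (x := (2:ℝ))).mul h2
      rw [h0, mul_zero] at this
      exact this
    apply squeeze_zero' (g := fun t : ℝ => 2 * ((∫ s in (1:ℝ)..(2*t), φ s / s ^ 2)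
        - ∫ s in (1:ℝ)..t, φ s / s ^ 2)) _ _ hGdiff
    · filter_upwards [eventually_ge_atTop (1:ℝ)] with t ht
      exact div_nonneg (hnonneg t (by norm_num; linarith)) (by linarith)
    · filter_upwards [eventually_ge_atTop (1:ℝ)] with t ht
      have ht0 : (0:ℝ) < t := by linarith
      have ht2 : t ≤ 2 * t := by linarith
      have hsub : (∫ s in (1:ℝ)..(2*t), φ s / s ^ 2) - ∫ s in (1:ℝ)..t, φ s / s ^ 2
          = ∫ s in t..(2*t), φ s / s ^ 2 := by
        rw [← intervalIntegral.integral_interval_sub_left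
          (hii 1 (2*t) le_rfl (by linarith)) (hii 1 t le_rfl ht)]
      rw [hsub]
      have h0notin : (0:ℝ) ∉ Set.uIcc t (2*t) := by
        rw [uIcc_of_le ht2]
        intro h
        exact absurd h.1 (by linarith)
      have hconst : (∫ s in t..(2*t), φ t / s ^ 2) = φ t / (2 * t) := by
        have hz : (∫ s in t..(2*t), (s:ℝ) ^ (-2 : ℤ))
            = ((2*t) ^ ((-2:ℤ) + 1) - t ^ ((-2:ℤ) + 1)) / (((-2:ℤ) : ℝ) + 1) :=
          integral_zpow (Or.inr ⟨by norm_num, h0notin⟩)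
        have heq : (∫ s in t..(2*t), φ t / s ^ 2) = φ t * ∫ s in t..(2*t), (s:ℝ) ^ (-2 : ℤ) := by
          rw [← intervalIntegral.integral_const_mul]
          apply intervalIntegral.integral_congr
          intro s _
          simp [div_eq_mul_inv, zpow_neg]
        rw [heq, hz]
        norm_num [zpow_neg]
        field_simp
        ring
      have hci : IntervalIntegrable (fun s => φ t / s ^ 2) volume t (2*t) := by
        apply ContinuousOn.intervalIntegrable
        apply ContinuousOn.div continuousOn_const (continuousOn_pow 2)
        intro s hs
        rw [uIcc_of_le ht2] at hs
        have hs0 : 0 < s := lt_of_lt_of_le ht0 hs.1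
        positivity
      have hlow : φ t / (2 * t) ≤ ∫ s in t..(2*t), φ s / s ^ 2 := by
        rw [← hconst]
        refine intervalIntegral.integral_mono_on ht2 hci (hii t (2*t) ht ht2) ?_
        intro s hs
        have hs0 : 0 < s := lt_of_lt_of_le ht0 hs.1
        have hφle : φ t ≤ φ s := hmono (mem_Ioi.2 ht0) (mem_Ioi.2 hs0) hs.1
        have hs2 : (0:ℝ) < s ^ 2 := by positivity
        exact div_le_div_of_nonneg_right hφle hs2.le
      have h2eq : 2 * (φ t / (2 * t)) = φ t / t := by
        field_simp
      calc φ t / t = 2 * (φ t / (2 * t)) := h2eq.symm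
        _ ≤ 2 * ∫ s in t..(2*t), φ s / s ^ 2 := by linarith
  -- final squeeze
  have hmid : Tendsto (fun t => Real.exp 1 * (φ (Real.exp 1 * t) / (Real.exp 1 * t)))
      atTop (nhds 0) := by
    have h2 := htail.comp (tendsto_id.const_mul_atTop (Real.exp_pos 1))
    have := (tendsto_const_nhds (x := Real.exp 1)).mul h2
    rw [mul_zero] at this
    exact this
  apply squeeze_zero' (g := fun t => Real.exp 1 * (φ (Real.exp 1 * t) / (Real.exp 1 * t))) _ _ hmid
  · filter_upwards [eventually_gt_atTop (0:ℝ)] with t ht using hφ'nonneg t ht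
  · filter_upwards [eventually_gt_atTop (0:ℝ)] with t ht
    have h := hkey t ht
    have hφt : 0 ≤ φ t := hnonneg t ht
    have he : (0:ℝ) < Real.exp 1 := Real.exp_pos 1
    have heq : Real.exp 1 * (φ (Real.exp 1 * t) / (Real.exp 1 * t)) = φ (Real.exp 1 * t) / t := by
      field_simp
    rw [heq, le_div_iff₀ ht]
    nlinarith
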